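/- If constants P^{γαβ} (γ, α, β ∈ {0,1,2}) satisfy the null condition P^{γαβ}ξ_γ ξ_α ξ_β = 0 for all ξ with ξ₀² = ξ₁² + ξ₂², then on the cone K = {t ≥ |x| + 1} with Ψ⁰₀ = t/s, Ψ⁰ₐ = -xₐ/s, one has |P^{γαβ} Ψ⁰_γ Ψ⁰_α Ψ⁰_β| ≤ C·(t/s) for a constant C depending only on the P^{γαβ}. -/
import Mathlib

open Finset

/-- The null condition for constants `P^{γαβ}` in two space dimensions. -/
def NullCond (P : Fin 3 → Fin 3 → Fin 3 → ℝ) : Prop :=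
  ∀ ξ : Fin 3 → ℝ, ξ 0 ^ 2 = ξ 1 ^ 2 + ξ 2 ^ 2 →
    ∑ γ : Fin 3, ∑ α : Fin 3, ∑ β : Fin 3, P γ α β * ξ γ * ξ α * ξ β = 0

lemma cube_diff (a a' b b' c c' d M : ℝ)
    (hd : 0 ≤ d)
    (ha : |a - a'| ≤ d) (hb : |b - b'| ≤ d) (hc : |c - c'| ≤ d)
    (hb1 : |b| ≤ M) (hc1 : |c| ≤ M) (ha2 : |a'| ≤ M) (hb2 : |b'| ≤ M)
    (hdm : d * M ^ 2 ≤ M) :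
    |a * b * c - a' * b' * c'| ≤ 3 * M := by
  have hM : 0 ≤ M := le_trans (abs_nonneg _) hb1
  have key : a * b * c - a' * b' * c'
      = (a - a') * b * c + a' * (b - b') * c + a' * b' * (c - c') := by ring
  have h1 : |(a - a') * b * c| ≤ d * M ^ 2 := by
    rw [abs_mul, abs_mul]
    calc |a - a'| * |b| * |c| ≤ d * M * M := by
          gcongr
      _ = d * M ^ 2 := by ring
  have h2 : |a' * (b - b') * c| ≤ d * M ^ 2 := by
    rw [abs_mul, abs_mul]
    calc |a'| * |b - b'| * |c| ≤ M * d * M := by gcongr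
      _ = d * M ^ 2 := by ring
  have h3 : |a' * b' * (c - c')| ≤ d * M ^ 2 := by
    rw [abs_mul, abs_mul]
    calc |a'| * |b'| * |c - c'| ≤ M * M * d := by gcongr
      _ = d * M ^ 2 := by ring
  rw [key]
  calc |(a - a') * b * c + a' * (b - b') * c + a' * b' * (c - c')|
      ≤ |(a - a') * b * c + a' * (b - b') * c| + |a' * b' * (c - c')| := abs_add_le _ _
    _ ≤ |(a - a') * b * c| + |a' * (b - b') * c| + |a' * b' * (c - c')| := by
        have := abs_add_le ((a - a') * b * c) (a' * (b - b') * c)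
        linarith
    _ ≤ d * M ^ 2 + d * M ^ 2 + d * M ^ 2 := by linarith
    _ ≤ 3 * M := by linarith

theorem stmt2 (P : Fin 3 → Fin 3 → Fin 3 → ℝ) (hP : NullCond P) :
    ∃ C > (0 : ℝ), ∀ t x1 x2 : ℝ, Real.sqrt (x1 ^ 2 + x2 ^ 2) + 1 ≤ t →
      |∑ γ : Fin 3, ∑ α : Fin 3, ∑ β : Fin 3,
          P γ α β * (![t, -x1, -x2] γ / Real.sqrt (t ^ 2 - x1 ^ 2 - x2 ^ 2))
            * (![t, -x1, -x2] α / Real.sqrt (t ^ 2 - x1 ^ 2 - x2 ^ 2))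
            * (![t, -x1, -x2] β / Real.sqrt (t ^ 2 - x1 ^ 2 - x2 ^ 2))|
        ≤ C * (t / Real.sqrt (t ^ 2 - x1 ^ 2 - x2 ^ 2)) := by
  refine ⟨3 * (∑ γ : Fin 3, ∑ α : Fin 3, ∑ β : Fin 3, |P γ α β|) + 1, by positivity, ?_⟩
  intro t x1 x2 hK
  set r : ℝ := Real.sqrt (x1 ^ 2 + x2 ^ 2) with hrdef
  have hr0 : 0 ≤ r := Real.sqrt_nonneg _
  have hr2 : r ^ 2 = x1 ^ 2 + x2 ^ 2 := Real.sq_sqrt (by positivity)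
  have htr : r < t := by linarith
  have ht1 : (1:ℝ) ≤ t := by linarith
  have ht0 : (0:ℝ) < t := by linarith
  have hst : t ^ 2 - x1 ^ 2 - x2 ^ 2 = (t - r) * (t + r) := by
    linear_combination hr2
  have hpos2 : 0 < t ^ 2 - x1 ^ 2 - x2 ^ 2 := by
    rw [hst]; have : 0 < t - r := by linarith
    positivity
  set s : ℝ := Real.sqrt (t ^ 2 - x1 ^ 2 - x2 ^ 2) with hsdef
  have hs0 : 0 < s := Real.sqrt_pos.mpr hpos2
  have hs2 : s ^ 2 = t ^ 2 - x1 ^ 2 - x2 ^ 2 := Real.sq_sqrt hpos2.le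
  set ξ : Fin 3 → ℝ := fun i => ![t, -x1, -x2] i / s with hxi
  set ζ : Fin 3 → ℝ := fun i => ![r, -x1, -x2] i / s with hzeta
  set M : ℝ := t / s with hMdef
  set d : ℝ := (t - r) / s with hddef
  have hM0 : 0 ≤ M := by positivity
  have hd0 : 0 ≤ d := by
    have : 0 ≤ t - r := by linarith
    positivity
  have hx1r : |x1| ≤ r := by
    rw [← Real.sqrt_sq_eq_abs, hrdef]
    exact Real.sqrt_le_sqrt (by nlinarith [sq_nonneg x2])
  have hx2r : |x2| ≤ r := by
    rw [← Real.sqrt_sq_eq_abs, hrdef]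
    exact Real.sqrt_le_sqrt (by nlinarith [sq_nonneg x1])
  have hxiM : ∀ i, |ξ i| ≤ M := by
    intro i
    fin_cases i <;> simp [hxi, hMdef, abs_div, abs_of_pos hs0, abs_of_pos ht0] <;>
      gcongr <;> linarith [hx1r, hx2r, htr]
  have hzetaM : ∀ i, |ζ i| ≤ M := by
    intro i
    fin_cases i <;>
      simp [hzeta, hMdef, abs_div, abs_of_pos hs0, abs_of_nonneg hr0] <;>
      gcongr <;> linarith [hx1r, hx2r, htr]
  have htr' : (0:ℝ) ≤ t - r := by linarith
  have hd0' : (0:ℝ) ≤ (t - r) / s := by positivity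
  have hdiff : ∀ i, |ξ i - ζ i| ≤ d := by
    intro i
    fin_cases i <;>
      simp [hxi, hzeta, hddef, div_sub_div_same, abs_of_nonneg hd0'] <;>
      exact hd0'
  have hss : s * s = (t - r) * (t + r) := by rw [← hst, ← hs2]; ring
  have hdM : d * M ≤ 1 := by
    rw [hddef, hMdef, div_mul_div_comm, div_le_one (by positivity), hss]
    nlinarith [mul_nonneg htr' hr0]
  have hdm : d * M ^ 2 ≤ M := by nlinarith
  have hnull : ζ 0 ^ 2 = ζ 1 ^ 2 + ζ 2 ^ 2 := by
    simp only [hzeta]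
    simp
    field_simp
    linarith [hr2]
  have hzero := hP ζ hnull
  have hsplit :
      (∑ γ : Fin 3, ∑ α : Fin 3, ∑ β : Fin 3, P γ α β * ξ γ * ξ α * ξ β)
      = ∑ γ : Fin 3, ∑ α : Fin 3, ∑ β : Fin 3,
          (P γ α β * ξ γ * ξ α * ξ β - P γ α β * ζ γ * ζ α * ζ β) := by
    rw [eq_comm]
    calc ∑ γ : Fin 3, ∑ α : Fin 3, ∑ β : Fin 3,
          (P γ α β * ξ γ * ξ α * ξ β - P γ α β * ζ γ * ζ α * ζ β)
        = (∑ γ : Fin 3, ∑ α : Fin 3, ∑ β : Fin 3, P γ α β * ξ γ * ξ α * ξ β)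
          - ∑ γ : Fin 3, ∑ α : Fin 3, ∑ β : Fin 3, P γ α β * ζ γ * ζ α * ζ β := by
          simp [Finset.sum_sub_distrib]
      _ = _ := by rw [hzero, sub_zero]
  calc |∑ γ : Fin 3, ∑ α : Fin 3, ∑ β : Fin 3, P γ α β * ξ γ * ξ α * ξ β|
      = |∑ γ : Fin 3, ∑ α : Fin 3, ∑ β : Fin 3,
          (P γ α β * ξ γ * ξ α * ξ β - P γ α β * ζ γ * ζ α * ζ β)| := by rw [hsplit]
    _ ≤ ∑ γ : Fin 3, ∑ α : Fin 3, ∑ β : Fin 3,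
          |P γ α β * ξ γ * ξ α * ξ β - P γ α β * ζ γ * ζ α * ζ β| := by
        refine (Finset.abs_sum_le_sum_abs _ _).trans (Finset.sum_le_sum fun γ _ => ?_)
        refine (Finset.abs_sum_le_sum_abs _ _).trans (Finset.sum_le_sum fun α _ => ?_)
        exact Finset.abs_sum_le_sum_abs _ _
    _ ≤ ∑ γ : Fin 3, ∑ α : Fin 3, ∑ β : Fin 3, |P γ α β| * (3 * M) := by
        refine Finset.sum_le_sum fun γ _ => Finset.sum_le_sum fun α _ =>
          Finset.sum_le_sum fun β _ => ?_
        rw [show P γ α β * ξ γ * ξ α * ξ β - P γ α β * ζ γ * ζ α * ζ β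
            = P γ α β * (ξ γ * ξ α * ξ β - ζ γ * ζ α * ζ β) from by ring, abs_mul]
        exact mul_le_mul_of_nonneg_left
          (cube_diff _ _ _ _ _ _ d M hd0 (hdiff γ) (hdiff α) (hdiff β)
            (hxiM α) (hxiM β) (hzetaM γ) (hzetaM α) hdm) (abs_nonneg _)
    _ = (∑ γ : Fin 3, ∑ α : Fin 3, ∑ β : Fin 3, |P γ α β|) * (3 * M) := by
        simp [Finset.sum_mul]
    _ ≤ (3 * (∑ γ : Fin 3, ∑ α : Fin 3, ∑ β : Fin 3, |P γ α β|) + 1) * M := by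
        have hS : 0 ≤ ∑ γ : Fin 3, ∑ α : Fin 3, ∑ β : Fin 3, |P γ α β| :=
          Finset.sum_nonneg fun _ _ => Finset.sum_nonneg fun _ _ =>
            Finset.sum_nonneg fun _ _ => abs_nonneg _
        nlinarith
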